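/- Let G = (V, E, ends) be a multigraph, let r ≥ 0 be an integer, and let e₀ ∈ E be a non-loop edge with endpoints p ≠ q. Let G − e₀ be the multigraph with vertex type V, edge type {e ∈ E : e ≠ e₀}, and the restriction of ends. Let G/e₀ be the multigraph with vertex type V' = {v ∈ V : v ≠ q}, edge type E, and endpoint map Sym2.map φ ∘ ends, where φ : V → V' sends q to p and fixes all other vertices (so e₀ and all edges parallel to it become loops at p; no edge is deleted). For a multigraph H with vertex type W and for k ∈ ℕ, set N_H(k) := #{a : W → ℕ : ∑_{w∈W} a_w = k and ∑_{w∈S} a_w < κ_S^H + r for every nonempty subset S ⊆ W}, where κ^H is the degree function of H. Then N_G(0) = N_{G/e₀}(0), and N_G(k+1) = N_{G/e₀}(k+1) + N_{G−e₀}(k) for every k ∈ ℕ (the loopy deletion–contraction relation; N_H(k) is the dimension of the degree-k component of the r-bizonotopal algebra of H). -/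

import Mathlib

open Finset

/-- The degree `κ_S` of a subset `S` of vertices of a multigraph `(W, F, ends)`. -/
def multigraphKappa {W F : Type*} [Fintype F] [DecidableEq W]
    (ends : F → Sym2 W) (S : Finset W) : ℕ :=
  (Finset.univ.filter fun e => ∃ v ∈ S, v ∈ ends e).card

/-- `N_H(k)`: the number of vectors `a : W → ℕ` of total weight `k` with
`∑_{w∈S} a w < κ_S + r` for every nonempty `S ⊆ W`; this is the dimension of the
degree-`k` component of the `r`-bizonotopal algebra of the multigraph `H`. -/
noncomputable def Ncount {W F : Type*} [Fintype W] [Fintype F] [DecidableEq W]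
    (ends : F → Sym2 W) (r k : ℕ) : ℕ :=
  Set.ncard {a : W → ℕ | ∑ w : W, a w = k ∧
    ∀ S : Finset W, S.Nonempty → ∑ w ∈ S, a w < multigraphKappa ends S + r}

namespace LoopyDC
variable {V E : Type*} [Fintype V] [Fintype E] [DecidableEq V] [DecidableEq E]

set_option linter.unusedSectionVars false

def AG (ends : E → Sym2 V) (r k : ℕ) : Set (V → ℕ) :=
  {a | ∑ w : V, a w = k ∧ ∀ S : Finset V, S.Nonempty →
      ∑ w ∈ S, a w < multigraphKappa ends S + r}

lemma Ncount_eq (ends : E → Sym2 V) (r k : ℕ) : Ncount ends r k = (AG ends r k).ncard := rfl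

lemma AG_finite (ends : E → Sym2 V) (r k : ℕ) : (AG ends r k).Finite := by
  apply Set.Finite.subset (Set.Finite.pi (fun _ : V => Set.finite_Iic k))
  intro a ha
  simp only [Set.mem_pi, Set.mem_univ, Set.mem_Iic, forall_true_left]
  intro v
  rw [← ha.1]
  exact Finset.single_le_sum (fun i _ => Nat.zero_le _) (mem_univ v)

lemma kappa_mono (ends : E → Sym2 V) {S T : Finset V} (h : S ⊆ T) :
    multigraphKappa ends S ≤ multigraphKappa ends T := by
  apply card_le_card
  apply Finset.monotone_filter_right
  rintro e - ⟨v, hv, hve⟩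
  exact ⟨v, h hv, hve⟩

lemma kappa_pos (ends : E → Sym2 V) {S : Finset V} {e : E} {v : V} (hv : v ∈ S)
    (hve : v ∈ ends e) : 1 ≤ multigraphKappa ends S := by
  have : (0:ℕ) < (Finset.univ.filter fun e => ∃ v ∈ S, v ∈ ends e).card :=
    card_pos.2 ⟨e, mem_filter.2 ⟨mem_univ _, v, hv, hve⟩⟩
  exact this

lemma kappa_coverage (ends : E → Sym2 V) (e₀ : E) (p q : V) (he₀ : ends e₀ = s(p, q))
    {S T : Finset V} (hpS : p ∈ S) (hqS : q ∉ S) (hqT : q ∈ T) (hpT : p ∉ T) :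
    multigraphKappa ends (S ∪ T) + multigraphKappa ends (S ∩ T) + 1 ≤
      multigraphKappa ends S + multigraphKappa ends T := by
  classical
  set P : Finset V → Finset E := fun X => univ.filter fun e => ∃ v ∈ X, v ∈ ends e with hP
  have hunion : P S ∪ P T = P (S ∪ T) := by
    ext e
    simp only [hP, mem_union, mem_filter, mem_univ, true_and]
    constructor
    · rintro (⟨v, hv, hve⟩ | ⟨v, hv, hve⟩)
      exacts [⟨v, Or.inl hv, hve⟩, ⟨v, Or.inr hv, hve⟩]
    · rintro ⟨v, hv, hve⟩
      rcases hv with h | h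
      exacts [Or.inl ⟨v, h, hve⟩, Or.inr ⟨v, h, hve⟩]
  have hins : insert e₀ (P (S ∩ T)) ⊆ P S ∩ P T := by
    intro e he
    rcases mem_insert.1 he with rfl | he
    · refine mem_inter.2 ⟨mem_filter.2 ⟨mem_univ _, p, hpS, ?_⟩,
        mem_filter.2 ⟨mem_univ _, q, hqT, ?_⟩⟩ <;> simp [he₀]
    · rcases mem_filter.1 he with ⟨-, v, hv, hve⟩
      exact mem_inter.2 ⟨mem_filter.2 ⟨mem_univ _, v, (mem_inter.1 hv).1, hve⟩,
        mem_filter.2 ⟨mem_univ _, v, (mem_inter.1 hv).2, hve⟩⟩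
  have hnm : e₀ ∉ P (S ∩ T) := by
    simp only [hP, mem_filter, mem_univ, true_and, not_exists, not_and]
    rintro v hv hve
    rw [he₀, Sym2.mem_iff] at hve
    rcases hve with rfl | rfl
    exacts [hpT (mem_inter.1 hv).2, hqS (mem_inter.1 hv).1]
  have h1 : (P (S ∩ T)).card + 1 ≤ (P S ∩ P T).card := by
    have := card_le_card hins
    rwa [card_insert_of_notMem hnm] at this
  have h2 : (P S).card + (P T).card = (P (S ∪ T)).card + (P S ∩ P T).card := by
    rw [← hunion]; exact (card_union_add_card_inter _ _).symm
  show (P (S ∪ T)).card + (P (S ∩ T)).card + 1 ≤ (P S).card + (P T).card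
  omega

lemma kappa_del (ends : E → Sym2 V) (e₀ : E) (S : Finset V) :
    multigraphKappa ends S =
      multigraphKappa (fun e : {e : E // e ≠ e₀} => ends e.1) S +
        (if ∃ v ∈ S, v ∈ ends e₀ then 1 else 0) := by
  classical
  have hcard : ((univ : Finset {e : E // e ≠ e₀}).filter fun e => ∃ v ∈ S, v ∈ ends e.1).card
      = ((univ : Finset E).filter fun e => e ≠ e₀ ∧ ∃ v ∈ S, v ∈ ends e).card := by
    apply Finset.card_bij (fun e _ => e.1)
    · intro e he
      rcases mem_filter.1 he with ⟨-, h⟩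
      exact mem_filter.2 ⟨mem_univ _, e.2, h⟩
    · intro a ha b hb hab; exact Subtype.ext hab
    · intro e he
      rcases mem_filter.1 he with ⟨-, hne, h⟩
      exact ⟨⟨e, hne⟩, mem_filter.2 ⟨mem_univ _, h⟩, rfl⟩
  rw [multigraphKappa, multigraphKappa, hcard]
  by_cases h : ∃ v ∈ S, v ∈ ends e₀
  · rw [if_pos h]
    have : (univ.filter fun e : E => ∃ v ∈ S, v ∈ ends e) =
        insert e₀ (univ.filter fun e : E => e ≠ e₀ ∧ ∃ v ∈ S, v ∈ ends e) := by
      ext e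
      simp only [mem_filter, mem_univ, true_and, mem_insert]
      by_cases he : e = e₀ <;> simp [he, h]
    rw [this, card_insert_of_notMem (by simp)]
  · rw [if_neg h, add_zero]
    congr 1
    ext e
    simp only [mem_filter, mem_univ, true_and]
    constructor
    · intro hx
      refine ⟨?_, hx⟩
      rintro rfl; exact h hx
    · exact fun hx => hx.2

lemma kappa_con {W : Type*} [Fintype W] [DecidableEq W] (ends : E → Sym2 V) (ψ : V → W)
    (T : Finset W) :
    multigraphKappa (fun e => Sym2.map ψ (ends e)) T =
      multigraphKappa ends (univ.filter fun v => ψ v ∈ T) := by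
  unfold multigraphKappa
  congr 1
  apply filter_congr
  intro e _
  constructor
  · rintro ⟨w, hw, hwe⟩
    rcases Sym2.mem_map.1 hwe with ⟨v, hv, rfl⟩
    exact ⟨v, mem_filter.2 ⟨mem_univ _, hw⟩, hv⟩
  · rintro ⟨v, hv, hve⟩
    exact ⟨ψ v, (mem_filter.1 hv).2, Sym2.mem_map.2 ⟨v, hve, rfl⟩⟩

lemma sum_if_mem {S : Finset V} {p : V} (hp : p ∈ S) (g : V → ℕ) (m : ℕ) :
    ∑ v ∈ S, (if v = p then m else g v) = m + ∑ v ∈ S.erase p, g v := by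
  rw [← Finset.add_sum_erase S _ hp, if_pos rfl]
  congr 1
  exact Finset.sum_congr rfl fun v hv => if_neg (Finset.ne_of_mem_erase hv)

lemma sum_if_not_mem {S : Finset V} {p : V} (hp : p ∉ S) (g : V → ℕ) (m : ℕ) :
    ∑ v ∈ S, (if v = p then m else g v) = ∑ v ∈ S, g v :=
  Finset.sum_congr rfl fun v hv => if_neg (by rintro rfl; exact hp hv)

/-- The set of non-canonical vectors. -/
def Dset (ends : E → Sym2 V) (r : ℕ) (p q : V) (k : ℕ) : Set (V → ℕ) :=
  {a | a ∈ AG ends r k ∧ 1 ≤ a p ∧ ∀ S : Finset V, q ∈ S → p ∉ S →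
      ∑ w ∈ S, a w + 1 < multigraphKappa ends S + r}

lemma split_card (ends : E → Sym2 V) (r : ℕ) (p q : V) (k : ℕ) :
    Ncount ends r k =
      (AG ends r k \ Dset ends r p q k).ncard + (Dset ends r p q k).ncard := by
  have hsub : Dset ends r p q k ⊆ AG ends r k := fun a h => h.1
  rw [Ncount_eq, ← Set.ncard_diff_add_ncard_of_subset hsub (AG_finite ends r k)]

lemma Dset_zero (ends : E → Sym2 V) (r : ℕ) (p q : V) : Dset ends r p q 0 = ∅ := by
  ext a
  simp only [Set.mem_empty_iff_false, iff_false]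
  rintro ⟨⟨hsum, -⟩, hap, -⟩
  have : a p ≤ 0 := hsum ▸ Finset.single_le_sum (f := a) (fun i _ => Nat.zero_le _) (mem_univ p)
  omega

lemma del_card (ends : E → Sym2 V) (r : ℕ) (e₀ : E) (p q : V) (hpq : p ≠ q)
    (he₀ : ends e₀ = s(p, q)) (k : ℕ) :
    (Dset ends r p q (k + 1)).ncard =
      Ncount (fun e : {e : E // e ≠ e₀} => ends e.1) r k := by
  classical
  have htouch : ∀ S : Finset V, (∃ v ∈ S, v ∈ ends e₀) ↔ (p ∈ S ∨ q ∈ S) := by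
    intro S
    rw [he₀]
    constructor
    · rintro ⟨v, hv, hve⟩
      rcases Sym2.mem_iff.1 hve with rfl | rfl
      exacts [Or.inl hv, Or.inr hv]
    · rintro (h | h)
      exacts [⟨p, h, by simp⟩, ⟨q, h, by simp⟩]
  have hκ : ∀ S : Finset V, p ∈ S ∨ q ∈ S →
      multigraphKappa ends S = multigraphKappa (fun e : {e : E // e ≠ e₀} => ends e.1) S + 1 := by
    intro S h
    rw [kappa_del ends e₀ S, if_pos ((htouch S).2 h)]
  have hκ' : ∀ S : Finset V, p ∉ S → q ∉ S →
      multigraphKappa ends S = multigraphKappa (fun e : {e : E // e ≠ e₀} => ends e.1) S := by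
    intro S hp hq
    rw [kappa_del ends e₀ S, if_neg (fun h => by rcases (htouch S).1 h with h | h <;> tauto),
      Nat.add_zero]
  set f : (V → ℕ) → (V → ℕ) := fun a v => if v = p then a p - 1 else a v with hf
  have hbij : Set.BijOn f (Dset ends r p q (k + 1))
      (AG (fun e : {e : E // e ≠ e₀} => ends e.1) r k) := by
    refine ⟨?_, ?_, ?_⟩
    · rintro a ⟨⟨hsum, hcon⟩, hap, hD⟩
      constructor
      · have h1 : ∑ v : V, f a v = (a p - 1) + ∑ v ∈ univ.erase p, a v :=
          sum_if_mem (mem_univ p) a (a p - 1)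
        have h2 : a p + ∑ v ∈ univ.erase p, a v = k + 1 := by
          rw [Finset.add_sum_erase _ _ (mem_univ p)]; exact hsum
        omega
      · intro S hS
        by_cases hp : p ∈ S
        · have h1 : ∑ v ∈ S, f a v = (a p - 1) + ∑ v ∈ S.erase p, a v :=
            sum_if_mem hp a (a p - 1)
          have h2 : a p + ∑ v ∈ S.erase p, a v = ∑ v ∈ S, a v :=
            Finset.add_sum_erase _ _ hp
          have h3 := hcon S hS
          have h4 := hκ S (Or.inl hp)
          omega
        · have h1 : ∑ v ∈ S, f a v = ∑ v ∈ S, a v := sum_if_not_mem hp a (a p - 1)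
          by_cases hq : q ∈ S
          · have h3 := hD S hq hp
            have h4 := hκ S (Or.inr hq)
            omega
          · have h3 := hcon S hS
            have h4 := hκ' S hp hq
            omega
    · rintro a ⟨⟨-, -⟩, hap, -⟩ a' ⟨⟨-, -⟩, hap', -⟩ heq
      funext v
      by_cases hv : v = p
      · subst hv
        have h1 := congrFun heq v
        simp only [hf, if_pos rfl] at h1
        omega
      · have h1 := congrFun heq v
        simpa only [hf, if_neg hv] using h1
    · rintro c ⟨hsum, hcon⟩
      refine ⟨fun v => if v = p then c p + 1 else c v, ⟨⟨?_, ?_⟩, by simp, ?_⟩, ?_⟩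
      · beta_reduce
        have h1 : ∑ v : V, (if v = p then c p + 1 else c v) = (c p + 1) + ∑ v ∈ univ.erase p, c v :=
          sum_if_mem (mem_univ p) c (c p + 1)
        have h2 : c p + ∑ v ∈ univ.erase p, c v = k := by
          rw [Finset.add_sum_erase _ _ (mem_univ p)]; exact hsum
        omega
      · intro S hS
        beta_reduce
        by_cases hp : p ∈ S
        · have h1 : ∑ v ∈ S, (if v = p then c p + 1 else c v) = (c p + 1) + ∑ v ∈ S.erase p, c v :=
            sum_if_mem hp c (c p + 1)
          have h2 : c p + ∑ v ∈ S.erase p, c v = ∑ v ∈ S, c v := Finset.add_sum_erase _ _ hp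
          have h3 := hcon S hS
          have h4 := hκ S (Or.inl hp)
          omega
        · have h1 : ∑ v ∈ S, (if v = p then c p + 1 else c v) = ∑ v ∈ S, c v :=
            sum_if_not_mem hp c (c p + 1)
          have h3 := hcon S hS
          have h4 := kappa_del ends e₀ S
          omega
      · intro S hq hp
        beta_reduce
        have h1 : ∑ v ∈ S, (if v = p then c p + 1 else c v) = ∑ v ∈ S, c v :=
          sum_if_not_mem hp c (c p + 1)
        have h3 := hcon S ⟨q, hq⟩
        have h4 := hκ S (Or.inr hq)
        omega
      · funext v
        by_cases hv : v = p
        · subst hv; simp [hf]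
        · simp [hf, hv]
  rw [Ncount_eq, ← hbij.image_eq, Set.ncard_image_of_injOn hbij.injOn]


def phi {p q : V} (hpq : p ≠ q) : V → {v : V // v ≠ q} :=
  fun v => if h : v = q then ⟨p, hpq⟩ else ⟨v, h⟩

lemma phi_q {p q : V} (hpq : p ≠ q) : phi hpq q = ⟨p, hpq⟩ := dif_pos rfl

lemma phi_ne {p q : V} (hpq : p ≠ q) {v : V} (hv : v ≠ q) : phi hpq v = ⟨v, hv⟩ := dif_neg hv

def bang {q : V} (b : {v : V // v ≠ q} → ℕ) : V → ℕ :=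
  fun v => if h : v = q then 0 else b ⟨v, h⟩

lemma bang_q {q : V} (b : {v : V // v ≠ q} → ℕ) : bang b q = 0 := dif_pos rfl

lemma bang_ne {q : V} (b : {v : V // v ≠ q} → ℕ) {v : V} (hv : v ≠ q) :
    bang b v = b ⟨v, hv⟩ := dif_neg hv

lemma sum_bang {q : V} (b : {v : V // v ≠ q} → ℕ) {W : Finset V} (hqW : q ∉ W) :
    ∑ w ∈ univ.filter (fun w : {v : V // v ≠ q} => w.1 ∈ W), b w = ∑ v ∈ W, bang b v := by
  apply Finset.sum_bij (fun w _ => w.1)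
  · intro w hw; exact (mem_filter.1 hw).2
  · intro _ _ _ _ h; exact Subtype.ext h
  · intro v hv; exact ⟨⟨v, fun h => hqW (h ▸ hv)⟩, mem_filter.2 ⟨mem_univ _, hv⟩, rfl⟩
  · intro w hw; exact (bang_ne b w.2).symm

lemma sum_bang_univ {q : V} (b : {v : V // v ≠ q} → ℕ) :
    ∑ v : V, bang b v = ∑ w : {v : V // v ≠ q}, b w := by
  have h1 : (univ : Finset {v : V // v ≠ q}) =
      univ.filter (fun w : {v : V // v ≠ q} => w.1 ∈ univ.erase q) := by
    ext w; simp [w.2]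
  rw [h1, sum_bang b (notMem_erase q univ)]
  rw [← Finset.add_sum_erase univ (bang b) (mem_univ q), bang_q, Nat.zero_add]

def msum (p q : V) (a : V → ℕ) : {v : V // v ≠ q} → ℕ :=
  fun w => if w.1 = p then a p + a q else a w.1

lemma sum_msum {p q : V} (hpq : p ≠ q) (a : V → ℕ) (T : Finset {v : V // v ≠ q}) :
    ∑ w ∈ T, msum p q a w = ∑ v ∈ univ.filter (fun v => phi hpq v ∈ T), a v := by
  have hstep : ∀ w ∈ T, msum p q a w = a w.1 + (if w = ⟨p, hpq⟩ then a q else 0) := by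
    intro w _
    unfold msum
    by_cases h : w.1 = p
    · rw [if_pos h, if_pos (Subtype.ext h), h]
    · rw [if_neg h, if_neg (fun hh => h (by rw [hh])), Nat.add_zero]
  rw [Finset.sum_congr rfl hstep, Finset.sum_add_distrib,
    Finset.sum_ite_eq' T (⟨p, hpq⟩ : {v : V // v ≠ q}) (fun _ => a q)]
  have himg : ∑ w ∈ T, a w.1 = ∑ v ∈ T.image Subtype.val, a v :=
    (Finset.sum_image (fun x _ y _ h => Subtype.ext h)).symm
  have hqimg : q ∉ T.image Subtype.val := by
    simp only [mem_image, not_exists]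
    rintro w ⟨-, hw⟩; exact w.2 hw
  have hhat : univ.filter (fun v => phi hpq v ∈ T) =
      if (⟨p, hpq⟩ : {v : V // v ≠ q}) ∈ T then insert q (T.image Subtype.val)
      else T.image Subtype.val := by
    ext v
    simp only [mem_filter, mem_univ, true_and]
    by_cases hv : v = q
    · rw [hv, phi_q hpq]
      by_cases hp : (⟨p, hpq⟩ : {v : V // v ≠ q}) ∈ T <;> simp [hp, hqimg]
    · rw [phi_ne hpq hv]
      have hmem : (⟨v, hv⟩ : {v : V // v ≠ q}) ∈ T ↔ v ∈ T.image Subtype.val := by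
        simp only [mem_image]
        constructor
        · intro h; exact ⟨⟨v, hv⟩, h, rfl⟩
        · rintro ⟨w, hw, rfl⟩
          have : w = ⟨w.1, hv⟩ := Subtype.ext rfl
          rwa [← this]
      by_cases hp : (⟨p, hpq⟩ : {v : V // v ≠ q}) ∈ T
      · rw [if_pos hp, Finset.mem_insert]
        constructor
        · intro h; exact Or.inr (hmem.1 h)
        · rintro (h | h); exacts [absurd h hv, hmem.2 h]
      · rw [if_neg hp]; exact hmem
  rw [hhat]
  by_cases hp : (⟨p, hpq⟩ : {v : V // v ≠ q}) ∈ T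
  · rw [if_pos hp, if_pos hp, Finset.sum_insert hqimg, himg]
    omega
  · rw [if_neg hp, if_neg hp, Nat.add_zero, himg]


-- con_card, appended for testing
lemma con_card (ends : E → Sym2 V) (r : ℕ) (e₀ : E) (p q : V) (hpq : p ≠ q)
    (he₀ : ends e₀ = s(p, q)) (k : ℕ) :
    (AG ends r k \ Dset ends r p q k).ncard =
      Ncount (fun e => Sym2.map (phi hpq) (ends e)) r k := by
  classical
  set endsC : E → Sym2 {v : V // v ≠ q} := fun e => Sym2.map (phi hpq) (ends e) with hendsC
  have hbij : Set.BijOn (msum p q) (AG ends r k \ Dset ends r p q k) (AG endsC r k) := by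
    refine ⟨?_, ?_, ?_⟩
    · -- MapsTo
      rintro a ⟨⟨hsum, hcon⟩, -⟩
      refine ⟨?_, ?_⟩
      · have h1 := sum_msum hpq a (univ : Finset {v : V // v ≠ q})
        have h2 : (univ.filter fun v : V => phi hpq v ∈ (univ : Finset {v : V // v ≠ q})) =
            univ := by simp
        rw [h1, h2] at *
        exact hsum ▸ rfl
      · intro T hT
        rw [hendsC, kappa_con ends (phi hpq) T, sum_msum hpq a T]
        apply hcon
        obtain ⟨w, hw⟩ := hT
        refine ⟨w.1, mem_filter.2 ⟨mem_univ _, ?_⟩⟩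
        rw [phi_ne hpq w.2]
        exact hw
    · -- InjOn
      rintro a ⟨haAG, hna⟩ a' ⟨haAG', hna'⟩ heq
      have hoff : ∀ v, v ≠ p → v ≠ q → a v = a' v := by
        intro v hvp hvq
        have h := congrFun heq ⟨v, hvq⟩
        simpa [msum, hvp] using h
      have hsum2 : a p + a q = a' p + a' q := by
        have h := congrFun heq ⟨p, hpq⟩
        simpa [msum] using h
      have key : ∀ x y : V → ℕ, x ∈ AG ends r k → y ∈ AG ends r k →
          y ∉ Dset ends r p q k → (∀ v, v ≠ p → v ≠ q → x v = y v) →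
          x p + x q = y p + y q → ¬ (x p < y p) := by
        intro x y hx hy hny hoffxy hsxy hlt
        have hyp1 : 1 ≤ y p := by omega
        have hnall : ¬ (∀ S : Finset V, q ∈ S → p ∉ S →
            ∑ w ∈ S, y w + 1 < multigraphKappa ends S + r) :=
          fun hall => hny ⟨hy, hyp1, hall⟩
        push_neg at hnall
        obtain ⟨S, hqS, hpS, hge⟩ := hnall
        have e1 : x q + ∑ v ∈ S.erase q, x v = ∑ v ∈ S, x v :=
          Finset.add_sum_erase S x hqS
        have e2 : y q + ∑ v ∈ S.erase q, y v = ∑ v ∈ S, y v :=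
          Finset.add_sum_erase S y hqS
        have e3 : ∑ v ∈ S.erase q, x v = ∑ v ∈ S.erase q, y v :=
          Finset.sum_congr rfl fun v hv =>
            hoffxy v (fun h => hpS (h ▸ mem_of_mem_erase hv)) (ne_of_mem_erase hv)
        have e4 := hx.2 S ⟨q, hqS⟩
        omega
      rcases Nat.lt_trichotomy (a p) (a' p) with h | h | h
      · exact absurd h (key a a' haAG haAG' hna' hoff hsum2)
      · funext v
        by_cases hvp : v = p
        · rw [hvp]; exact h
        · by_cases hvq : v = q
          · rw [hvq]; omega
          · exact hoff v hvp hvq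
      · exact absurd h (key a' a haAG' haAG hna
          (fun v h1 h2 => (hoff v h1 h2).symm) hsum2.symm)
    · -- SurjOn
      rintro b ⟨hbsum, hbcon⟩
      set b! : V → ℕ := bang b with hbang
      have hb!q : b! q = 0 := bang_q b
      have hb!ne : ∀ (v : V) (h : v ≠ q), b! v = b ⟨v, h⟩ := fun v h => bang_ne b h
      have hKsub : ∀ W : Finset V, q ∉ W → W.Nonempty →
          ∑ v ∈ W, b! v + 1 ≤
            multigraphKappa ends (if p ∈ W then insert q W else W) + r := by
        intro W hqW hWne
        have hTne : (univ.filter fun w : {v : V // v ≠ q} => w.1 ∈ W).Nonempty := by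
          obtain ⟨v, hv⟩ := hWne
          exact ⟨⟨v, fun h => hqW (h ▸ hv)⟩, mem_filter.2 ⟨mem_univ _, hv⟩⟩
        have h1 := hbcon _ hTne
        rw [hendsC, kappa_con ends (phi hpq), sum_bang b hqW] at h1
        have hhat : (univ.filter fun v : V =>
            phi hpq v ∈ univ.filter (fun w : {v : V // v ≠ q} => w.1 ∈ W)) =
            if p ∈ W then insert q W else W := by
          ext v
          simp only [mem_filter, mem_univ, true_and]
          by_cases hv : v = q
          · rw [hv, phi_q hpq]
            by_cases hp : p ∈ W <;> simp [hp, hqW]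
          · rw [phi_ne hpq hv]
            by_cases hp : p ∈ W <;> simp [hp, hv]
        rw [hhat] at h1
        exact h1
      have hKb : ∀ W : Finset V, p ∈ W → q ∉ W →
          ∑ v ∈ W, b! v + 1 ≤ multigraphKappa ends (insert q W) + r := by
        intro W hp hq
        have h := hKsub W hq ⟨p, hp⟩
        rwa [if_pos hp] at h
      have hKb' : ∀ W : Finset V, W.Nonempty → p ∉ W → q ∉ W →
          ∑ v ∈ W, b! v + 1 ≤ multigraphKappa ends W + r := by
        intro W hWne hp hq
        have h := hKsub W hq hWne
        rwa [if_neg hp] at h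
      have hKq : ∀ S : Finset V, q ∈ S → p ∉ S →
          ∑ v ∈ S, b! v + 1 ≤ multigraphKappa ends S + r := by
        intro S hqS hpS
        have hsumS : b! q + ∑ v ∈ S.erase q, b! v = ∑ v ∈ S, b! v :=
          Finset.add_sum_erase S b! hqS
        by_cases hne : (S.erase q).Nonempty
        · have h := hKb' (S.erase q) hne (fun h => hpS (mem_of_mem_erase h))
            (notMem_erase q S)
          have hmono := kappa_mono ends (erase_subset q S)
          omega
        · have hS0 : ∑ v ∈ S.erase q, b! v = 0 := by
            rw [Finset.not_nonempty_iff_eq_empty.1 hne, Finset.sum_empty]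
          have hκpos : 1 ≤ multigraphKappa ends S :=
            kappa_pos ends hqS (by rw [he₀]; simp)
          omega
      set Q : Finset (Finset V) := univ.filter (fun S => q ∈ S ∧ p ∉ S) with hQdef
      have hQne : Q.Nonempty :=
        ⟨{q}, mem_filter.2 ⟨mem_univ _, mem_singleton_self q, by simp [hpq]⟩⟩
      set μ := Q.inf' hQne (fun S => multigraphKappa ends S + r - 1 - ∑ v ∈ S, b! v) with hμdef
      set bp := b ⟨p, hpq⟩ with hbpdef
      have hb!p : b! p = bp := hb!ne p hpq
      set aq := min bp μ with haqdef
      set a : V → ℕ := fun v => if v = q then aq else if v = p then bp - aq else b! v with hadef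
      have haqle : aq ≤ bp := min_le_left _ _
      have haqμ : aq ≤ μ := min_le_right _ _
      have haq' : a q = aq := if_pos rfl
      have hap : a p = bp - aq := by
        rw [hadef]
        beta_reduce
        rw [if_neg hpq, if_pos rfl]
      have haoff : ∀ v, v ≠ q → v ≠ p → a v = b! v := by
        intro v h1 h2
        rw [hadef]
        beta_reduce
        rw [if_neg h1, if_neg h2]
      have haqS : ∀ S : Finset V, q ∈ S → p ∉ S →
          aq + ∑ v ∈ S, b! v + 1 ≤ multigraphKappa ends S + r := by
        intro S h1 h2
        have hSQ : S ∈ Q := mem_filter.2 ⟨mem_univ _, h1, h2⟩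
        have h3 := Finset.inf'_le (fun S => multigraphKappa ends S + r - 1 - ∑ v ∈ S, b! v) hSQ
        have h4 := hKq S h1 h2
        rw [← hμdef] at h3
        omega
      have hsum_qp : ∀ S : Finset V, q ∈ S → p ∈ S →
          ∑ v ∈ S, a v = bp + ∑ v ∈ (S.erase q).erase p, b! v := by
        intro S h1 h2
        have e1 : a q + ∑ v ∈ S.erase q, a v = ∑ v ∈ S, a v := Finset.add_sum_erase S a h1
        have e2 : a p + ∑ v ∈ (S.erase q).erase p, a v = ∑ v ∈ S.erase q, a v :=
          Finset.add_sum_erase _ a (mem_erase.2 ⟨hpq, h2⟩)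
        have e3 : ∑ v ∈ (S.erase q).erase p, a v = ∑ v ∈ (S.erase q).erase p, b! v :=
          Finset.sum_congr rfl fun v hv =>
            haoff v (ne_of_mem_erase (mem_of_mem_erase hv)) (ne_of_mem_erase hv)
        rw [haq'] at e1
        rw [hap] at e2
        omega
      have hsum_q : ∀ S : Finset V, q ∈ S → p ∉ S →
          ∑ v ∈ S, a v = aq + ∑ v ∈ S, b! v := by
        intro S h1 h2
        have e1 : a q + ∑ v ∈ S.erase q, a v = ∑ v ∈ S, a v := Finset.add_sum_erase S a h1
        have e2 : b! q + ∑ v ∈ S.erase q, b! v = ∑ v ∈ S, b! v := Finset.add_sum_erase S b! h1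
        have e3 : ∑ v ∈ S.erase q, a v = ∑ v ∈ S.erase q, b! v :=
          Finset.sum_congr rfl fun v hv =>
            haoff v (ne_of_mem_erase hv) (fun h => h2 (h ▸ mem_of_mem_erase hv))
        rw [haq'] at e1
        omega
      have hsum_p : ∀ S : Finset V, q ∉ S → p ∈ S →
          ∑ v ∈ S, a v = (bp - aq) + ∑ v ∈ S.erase p, b! v := by
        intro S h1 h2
        have e1 : a p + ∑ v ∈ S.erase p, a v = ∑ v ∈ S, a v := Finset.add_sum_erase S a h2
        have e3 : ∑ v ∈ S.erase p, a v = ∑ v ∈ S.erase p, b! v :=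
          Finset.sum_congr rfl fun v hv =>
            haoff v (fun h => h1 (h ▸ mem_of_mem_erase hv)) (ne_of_mem_erase hv)
        rw [hap] at e1
        omega
      have hsum_0 : ∀ S : Finset V, q ∉ S → p ∉ S →
          ∑ v ∈ S, a v = ∑ v ∈ S, b! v := by
        intro S h1 h2
        exact Finset.sum_congr rfl fun v hv =>
          haoff v (fun h => h1 (h ▸ hv)) (fun h => h2 (h ▸ hv))
      have hsumuniv : ∑ v : V, a v = k := by
        have h1 := hsum_qp univ (mem_univ q) (mem_univ p)
        have h2 : ∑ v : V, b! v = k := by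
          rw [hbang, sum_bang_univ b]
          exact hbsum
        have h3 : b! q + ∑ v ∈ univ.erase q, b! v = ∑ v : V, b! v :=
          Finset.add_sum_erase univ b! (mem_univ q)
        have h4 : b! p + ∑ v ∈ (univ.erase q).erase p, b! v = ∑ v ∈ univ.erase q, b! v :=
          Finset.add_sum_erase _ b! (mem_erase.2 ⟨hpq, mem_univ p⟩)
        omega
      refine ⟨a, ⟨⟨hsumuniv, ?_⟩, ?_⟩, ?_⟩
      · -- AG constraints for a
        intro S hS
        by_cases h1 : q ∈ S <;> by_cases h2 : p ∈ S
        · rw [hsum_qp S h1 h2]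
          have hKbS := hKb (S.erase q) (mem_erase.2 ⟨hpq, h2⟩) (notMem_erase q S)
          rw [insert_erase h1] at hKbS
          have h5 : b! p + ∑ v ∈ (S.erase q).erase p, b! v = ∑ v ∈ S.erase q, b! v :=
            Finset.add_sum_erase _ b! (mem_erase.2 ⟨hpq, h2⟩)
          omega
        · rw [hsum_q S h1 h2]
          have := haqS S h1 h2
          omega
        · rw [hsum_p S h1 h2]
          by_cases hcase : bp ≤ μ
          · have haqbp : aq = bp := min_eq_left hcase
            by_cases hne : (S.erase p).Nonempty
            · have h := hKb' (S.erase p) hne (notMem_erase p S)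
                (fun h => h1 (mem_of_mem_erase h))
              have hmono := kappa_mono ends (erase_subset p S)
              omega
            · have hempty : ∑ v ∈ S.erase p, b! v = 0 := by
                rw [Finset.not_nonempty_iff_eq_empty.1 hne, Finset.sum_empty]
              have hκpos : 1 ≤ multigraphKappa ends S :=
                kappa_pos ends h2 (by rw [he₀]; simp)
              omega
          · obtain ⟨Sq, hSqQ, hSqeq⟩ := Finset.exists_mem_eq_inf' hQne
              (fun S => multigraphKappa ends S + r - 1 - ∑ v ∈ S, b! v)
            obtain ⟨-, hqSq, hpSq⟩ := mem_filter.1 hSqQ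
            have hKqSq := hKq Sq hqSq hpSq
            have haqeq : aq = multigraphKappa ends Sq + r - 1 - ∑ v ∈ Sq, b! v := by
              rw [haqdef, min_eq_right (le_of_not_ge hcase), hμdef, hSqeq]
            set W := S ∪ Sq.erase q with hWdef
            have hqW : q ∉ W := by
              rw [hWdef]
              simp only [mem_union, not_or]
              exact ⟨h1, notMem_erase q Sq⟩
            have hpW : p ∈ W := mem_union_left _ h2
            have hinsW : insert q W = S ∪ Sq := by
              rw [hWdef, ← Finset.union_insert, Finset.insert_erase hqSq]
            have hKbW := hKb W hpW hqW
            rw [hinsW] at hKbW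
            have hIsum : ∑ v ∈ S ∩ Sq, b! v ≤ multigraphKappa ends (S ∩ Sq) + r := by
              by_cases hne : (S ∩ Sq).Nonempty
              · have h := hKb' (S ∩ Sq) hne (fun h => hpSq (mem_inter.1 h).2)
                  (fun h => h1 (mem_inter.1 h).1)
                omega
              · rw [Finset.not_nonempty_iff_eq_empty.1 hne, Finset.sum_empty]
                exact Nat.zero_le _
            have hcov := kappa_coverage ends e₀ p q he₀ h2 h1 hqSq hpSq
            have hui : ∑ v ∈ S, b! v + ∑ v ∈ Sq, b! v =
                ∑ v ∈ S ∪ Sq, b! v + ∑ v ∈ S ∩ Sq, b! v :=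
              (Finset.sum_union_inter).symm
            have huW : ∑ v ∈ S ∪ Sq, b! v = ∑ v ∈ W, b! v := by
              rw [← hinsW, Finset.sum_insert hqW, hb!q, Nat.zero_add]
            have hSsum : b! p + ∑ v ∈ S.erase p, b! v = ∑ v ∈ S, b! v :=
              Finset.add_sum_erase S b! h2
            omega
        · rw [hsum_0 S h1 h2]
          have := hKb' S hS h2 h1
          omega
      · -- a is canonical (not in Dset)
        rintro ⟨-, hap1, hall⟩
        by_cases hcase : bp ≤ μ
        · have haqbp : aq = bp := min_eq_left hcase
          omega
        · obtain ⟨Sq, hSqQ, hSqeq⟩ := Finset.exists_mem_eq_inf' hQne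
            (fun S => multigraphKappa ends S + r - 1 - ∑ v ∈ S, b! v)
          obtain ⟨-, hqSq, hpSq⟩ := mem_filter.1 hSqQ
          have hKqSq := hKq Sq hqSq hpSq
          have haqeq : aq = multigraphKappa ends Sq + r - 1 - ∑ v ∈ Sq, b! v := by
            rw [haqdef, min_eq_right (le_of_not_ge hcase), hμdef, hSqeq]
          have h := hall Sq hqSq hpSq
          rw [hsum_q Sq hqSq hpSq] at h
          omega
      · -- msum p q a = b
        funext w
        show msum p q a w = b w
        unfold msum
        by_cases h : w.1 = p
        · rw [if_pos h, hap, haq']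
          have hw : w = ⟨p, hpq⟩ := Subtype.ext h
          rw [hw, ← hbpdef]
          omega
        · rw [if_neg h, haoff w.1 w.2 h, hb!ne w.1 w.2]
  rw [Ncount_eq, ← hbij.image_eq, Set.ncard_image_of_injOn hbij.injOn]

end LoopyDC

/-- The loopy deletion–contraction relation for the Hilbert function of the
`r`-bizonotopal algebra: `N_G(k+1) = N_{G/e₀}(k+1) + N_{G−e₀}(k)` (and the degree
zero components agree), where `G − e₀` deletes the non-loop edge `e₀` and `G/e₀`
identifies its endpoints `p ≠ q` without deleting any edge. -/
theorem loopy_deletion_contraction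
    {V E : Type*} [Fintype V] [Fintype E] [DecidableEq V] [DecidableEq E]
    (ends : E → Sym2 V) (r : ℕ)
    (e₀ : E) (p q : V) (hpq : p ≠ q) (he₀ : ends e₀ = s(p, q)) :
    let φ : V → {v : V // v ≠ q} := fun v => if h : v = q then ⟨p, hpq⟩ else ⟨v, h⟩
    let endsDel : {e : E // e ≠ e₀} → Sym2 V := fun e => ends e.1
    let endsCon : E → Sym2 {v : V // v ≠ q} := fun e => Sym2.map φ (ends e)
    Ncount ends r 0 = Ncount endsCon r 0 ∧
      ∀ k : ℕ, Ncount ends r (k + 1) = Ncount endsCon r (k + 1) + Ncount endsDel r k := by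
  intro φ endsDel endsCon
  constructor
  · have h := LoopyDC.split_card ends r p q 0
    rw [LoopyDC.con_card ends r e₀ p q hpq he₀ 0, LoopyDC.Dset_zero ends r p q,
      Set.ncard_empty, Nat.add_zero] at h
    exact h
  · intro k
    have h := LoopyDC.split_card ends r p q (k + 1)
    rw [LoopyDC.con_card ends r e₀ p q hpq he₀ (k + 1),
      LoopyDC.del_card ends r e₀ p q hpq he₀ k] at h
    exact h
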